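/- With f_i as the summands of F, the series Σ_{i=0}^{∞} f_i converges pointwise to F on [0,1], is uniformly bounded, and ∫_0^1 F(x) dx = Σ_{i=0}^{∞} ∫_0^1 f_i(x) dx = (1/24) · Σ_{i=0}^{∞} (5/8)^i = 1/9. -/

import Mathlib

/-- The `i`-th binary digit of `x ∈ [0,1]` (with `digit x 0` the units digit),
using the finite (terminating) expansion at dyadic rationals. -/
noncomputable def digit (x : ℝ) (i : ℕ) : ℕ := (⌊2 ^ i * x⌋).toNat % 2

/-- The tail sum `Σ_{j=i}^{∞} (1 - x_j)/2^j`. -/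
noncomputable def tail (x : ℝ) (i : ℕ) : ℝ :=
  ∑' j : ℕ, (1 - (digit x (i + j) : ℝ)) / 2 ^ (i + j)

/-- The function `F` from the cellular automaton `T_a`. -/
noncomputable def F (x : ℝ) : ℝ :=
  ∑' i : ℕ, (digit x i : ℝ) * 4 ^ (∑ j ∈ Finset.range i, digit x j) * (tail x i) ^ 2

/-- The `i`-th summand of the series defining `F`. -/
noncomputable def fi (i : ℕ) (x : ℝ) : ℝ :=
  (digit x i : ℝ) * 4 ^ (∑ j ∈ Finset.range i, digit x j) * (tail x i) ^ 2

lemma digit_le_one (x : ℝ) (i : ℕ) : digit x i ≤ 1 :=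
  Nat.lt_succ_iff.mp (Nat.mod_lt _ two_pos)

lemma digit_cast_nonneg (x : ℝ) (i : ℕ) : (0:ℝ) ≤ (digit x i : ℝ) := Nat.cast_nonneg _

lemma digit_cast_le_one (x : ℝ) (i : ℕ) : (digit x i : ℝ) ≤ 1 := by
  exact_mod_cast digit_le_one x i

lemma term_nonneg (x : ℝ) (k : ℕ) : (0:ℝ) ≤ (1 - (digit x k : ℝ)) / 2 ^ k := by
  apply div_nonneg (by linarith [digit_cast_le_one x k]) (by positivity)

lemma term_le (x : ℝ) (k : ℕ) : (1 - (digit x k : ℝ)) / 2 ^ k ≤ (1/2) ^ k := by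
  rw [one_div, inv_pow]
  apply div_le_of_le_mul₀ (by positivity) (by positivity)
  rw [inv_mul_cancel₀ (by positivity)]
  linarith [digit_cast_nonneg x k]

lemma geo_half : Summable (fun j : ℕ => ((1:ℝ)/2) ^ j) :=
  summable_geometric_of_lt_one (by norm_num) (by norm_num)

lemma geo_half_shift (i : ℕ) : Summable (fun j : ℕ => ((1:ℝ)/2) ^ (i + j)) := by
  have := geo_half.mul_left (((1:ℝ)/2) ^ i)
  refine this.congr fun j => ?_
  rw [pow_add]

lemma tail_summable (x : ℝ) (i : ℕ) :
    Summable (fun j : ℕ => (1 - (digit x (i + j) : ℝ)) / 2 ^ (i + j)) := by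
  exact Summable.of_nonneg_of_le (fun j => term_nonneg x (i+j)) (fun j => term_le x (i+j))
    (geo_half_shift i)

lemma tail_nonneg (x : ℝ) (i : ℕ) : 0 ≤ tail x i :=
  tsum_nonneg (fun j => term_nonneg x (i+j))

lemma tail_le (x : ℝ) (i : ℕ) : tail x i ≤ 2 * (1/2) ^ i := by
  have h := Summable.tsum_le_tsum (fun j => term_le x (i+j)) (tail_summable x i) (geo_half_shift i)
  calc tail x i ≤ ∑' j : ℕ, ((1:ℝ)/2) ^ (i + j) := h
    _ = (1/2)^i * ∑' j : ℕ, ((1:ℝ)/2) ^ j := by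
        rw [← tsum_mul_left]; exact tsum_congr fun j => by rw [pow_add]
    _ = 2 * (1/2) ^ i := by
        rw [tsum_geometric_of_lt_one (by norm_num) (by norm_num)]; ring

lemma tail_succ (x : ℝ) (i : ℕ) :
    tail x i = (1 - (digit x i : ℝ)) / 2 ^ i + tail x (i + 1) := by
  rw [tail, Summable.tsum_eq_zero_add (tail_summable x i)]
  have h2 : ∑' (b : ℕ), (1 - (digit x (i + (b+1)) : ℝ)) / 2 ^ (i + (b+1)) = tail x (i+1) := by
    rw [tail]
    exact tsum_congr fun j => by rw [show i + (j+1) = i + 1 + j by ring]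
  rw [h2]
  norm_num

lemma floor_two_mul (y : ℝ) : 2 * ⌊y⌋ ≤ ⌊2*y⌋ ∧ ⌊2*y⌋ < 2 * ⌊y⌋ + 2 := by
  constructor
  · rw [Int.le_floor]; push_cast; linarith [Int.floor_le y]
  · rw [Int.floor_lt]; push_cast; linarith [Int.lt_floor_add_one y]

lemma digit_succ_int (x : ℝ) (hx : 0 ≤ x) (k : ℕ) :
    (digit x (k+1) : ℤ) = ⌊2^(k+1)*x⌋ - 2*⌊2^k*x⌋ := by
  have hy : (2:ℝ)^(k+1) * x = 2 * (2^k * x) := by ring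
  have hb : 0 ≤ ⌊(2:ℝ)^k * x⌋ := Int.floor_nonneg.mpr (by positivity)
  obtain ⟨h1, h2⟩ := floor_two_mul ((2:ℝ)^k * x)
  rw [digit, hy]
  have ha : 0 ≤ ⌊2 * ((2:ℝ)^k * x)⌋ := le_trans (by linarith) h1
  push_cast [Int.toNat_of_nonneg ha]
  omega

noncomputable def vfl (x : ℝ) (k : ℕ) : ℝ := (1 + ⌊2^k * x⌋) / 2^k

lemma vfl_telescope (x : ℝ) (hx : 0 ≤ x) (k : ℕ) :
    (1 - (digit x (k+1) : ℝ)) / 2^(k+1) = vfl x k - vfl x (k+1) := by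
  have h := digit_succ_int x hx k
  have h' : (digit x (k+1) : ℝ) = (⌊2^(k+1)*x⌋ : ℝ) - 2*(⌊2^k*x⌋ : ℝ) := by
    exact_mod_cast congrArg (Int.cast : ℤ → ℝ) h
  rw [vfl, vfl, h']
  have h2 : (2:ℝ)^(k+1) = 2^k * 2 := by ring
  field_simp
  ring

lemma vfl_partial (x : ℝ) (hx : 0 ≤ x) (i n : ℕ) :
    ∑ j ∈ Finset.range n, (1 - (digit x (i+1+j) : ℝ)) / 2^(i+1+j) = vfl x i - vfl x (i+n) := by
  induction n with
  | zero => simp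
  | succ n ih =>
    rw [Finset.sum_range_succ, ih, show i+1+n = (i+n)+1 by ring,
      vfl_telescope x hx (i+n), show i+n+1 = i+(n+1) by ring]
    ring

lemma vfl_tendsto (x : ℝ) (i : ℕ) :
    Filter.Tendsto (fun n : ℕ => vfl x (i+n)) Filter.atTop (nhds x) := by
  have hb : ∀ n : ℕ, |vfl x (i+n) - x| ≤ (1/2)^n := by
    intro n
    have hp : (0:ℝ) < 2^(i+n) := by positivity
    have h1 : (2:ℝ)^(i+n) * x < 1 + ⌊2^(i+n)*x⌋ := by
      linarith [Int.lt_floor_add_one ((2:ℝ)^(i+n)*x)]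
    have h2 : (⌊2^(i+n)*x⌋ : ℝ) ≤ 2^(i+n)*x := Int.floor_le _
    have hle : (1:ℝ) ≤ 2^i := one_le_pow₀ (by norm_num)
    have hkey : ((1:ℝ)/2)^n * 2^(i+n) = 2^i := by
      rw [div_pow, one_pow, pow_add]; field_simp
    rw [abs_le, vfl]
    have e : ((1 + ⌊2^(i+n)*x⌋:ℝ)/2^(i+n) - x) * 2^(i+n) = 1 + ⌊2^(i+n)*x⌋ - 2^(i+n)*x := by
      field_simp
    constructor
    · nlinarith [pow_nonneg (by norm_num : (0:ℝ) ≤ 1/2) n]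
    · nlinarith [pow_nonneg (by norm_num : (0:ℝ) ≤ 1/2) n]
  have h0 : Filter.Tendsto (fun n : ℕ => ((1:ℝ)/2)^n) Filter.atTop (nhds 0) :=
    tendsto_pow_atTop_nhds_zero_of_lt_one (by norm_num) (by norm_num)
  have hb' : ∀ n : ℕ, ‖vfl x (i+n) - x‖ ≤ (1/2)^n := fun n => by
    rw [Real.norm_eq_abs]; exact hb n
  have hz := squeeze_zero_norm hb' h0
  have h2 := hz.add_const x
  simp only [sub_add_cancel, zero_add] at h2
  exact h2

lemma tail_formula (x : ℝ) (hx : 0 ≤ x) (i : ℕ) :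
    tail x (i+1) = (1 + ⌊2^i * x⌋) / 2^i - x := by
  have hs := tail_summable x (i+1)
  have h1 : Filter.Tendsto
      (fun n : ℕ => ∑ j ∈ Finset.range n, (1 - (digit x (i+1+j) : ℝ)) / 2^(i+1+j))
      Filter.atTop (nhds (tail x (i+1))) := hs.hasSum.tendsto_sum_nat
  have h2 : Filter.Tendsto
      (fun n : ℕ => ∑ j ∈ Finset.range n, (1 - (digit x (i+1+j) : ℝ)) / 2^(i+1+j))
      Filter.atTop (nhds (vfl x i - x)) := by
    have := (vfl_tendsto x i).const_sub (vfl x i)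
    refine this.congr fun n => ?_
    rw [vfl_partial x hx i n]
  exact tendsto_nhds_unique h1 h2

noncomputable def S (i : ℕ) (x : ℝ) : ℕ := ∑ j ∈ Finset.range i, digit x j

noncomputable def fi' (i : ℕ) (x : ℝ) : ℝ :=
  (digit x i : ℝ) * 4 ^ (S i x) * (tail x i) ^ 2

lemma digit_zero_of_lt_one (x : ℝ) (h0 : 0 ≤ x) (h1 : x < 1) : digit x 0 = 0 := by
  rw [digit]
  have : ⌊(2:ℝ)^0 * x⌋ = 0 := by
    rw [pow_zero, one_mul, Int.floor_eq_zero_iff]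
    exact ⟨h0, h1⟩
  rw [this]
  rfl

lemma digit_one_left (x : ℝ) (h0 : 0 ≤ x) (h1 : x < 1/2) : digit x 1 = 0 := by
  rw [digit]
  have : ⌊(2:ℝ)^1 * x⌋ = 0 := by
    rw [Int.floor_eq_zero_iff]
    constructor <;> [skip; skip] <;> norm_num <;> nlinarith
  rw [this]; rfl

lemma digit_one_right (x : ℝ) (h0 : 1/2 ≤ x) (h1 : x < 1) : digit x 1 = 1 := by
  rw [digit]
  have : ⌊(2:ℝ)^1 * x⌋ = 1 := by
    rw [Int.floor_eq_iff]
    norm_num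
    constructor <;> nlinarith
  rw [this]; rfl

lemma digit_shift (x : ℝ) (i : ℕ) : digit (2*x) i = digit x (i+1) := by
  rw [digit, digit, show (2:ℝ)^(i+1) * x = 2^i * (2*x) by ring]

lemma digit_shift_right (x : ℝ) (h0 : 1/2 ≤ x) (k : ℕ) :
    digit x (k+2) = digit (2*x - 1) (k+1) := by
  have hy : (0:ℝ) ≤ 2*x - 1 := by linarith
  have hfl : ⌊(2:ℝ)^(k+1) * (2*x-1)⌋ = ⌊(2:ℝ)^(k+2) * x⌋ - 2*2^k := by
    rw [show (2:ℝ)^(k+1) * (2*x-1) = 2^(k+2)*x - (2*2^k : ℤ) by push_cast; ring]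
    rw [Int.floor_sub_intCast]
  have ha : 0 ≤ ⌊(2:ℝ)^(k+2) * x⌋ := Int.floor_nonneg.mpr (by positivity)
  have hb : 0 ≤ ⌊(2:ℝ)^(k+1) * (2*x-1)⌋ := Int.floor_nonneg.mpr (by positivity)
  rw [digit, digit, hfl]
  rw [hfl] at hb
  omega

lemma S_shift_left (x : ℝ) (h0 : 0 ≤ x) (h1 : x < 1) (i : ℕ) :
    S (i+1) x = S i (2*x) := by
  rw [S, S, Finset.sum_range_succ']
  simp only [digit_shift]
  rw [digit_zero_of_lt_one x h0 h1, add_zero]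

lemma S_shift_right (x : ℝ) (h0 : 1/2 ≤ x) (h1 : x < 1) (i : ℕ) :
    S (i+2) x = 1 + S (i+1) (2*x - 1) := by
  have hy0 : (0:ℝ) ≤ 2*x - 1 := by linarith
  have hy1 : 2*x - 1 < 1 := by linarith
  rw [S, S, Finset.sum_range_succ', Finset.sum_range_succ',
    Finset.sum_range_succ' (fun j => digit (2*x-1) j) i]
  simp only [digit_shift_right x h0]
  rw [digit_zero_of_lt_one x (by linarith) h1,
    digit_zero_of_lt_one (2*x-1) hy0 hy1, digit_one_right x h0 h1]
  omega

lemma fi_eq_S (i : ℕ) (x : ℝ) : fi i x = (digit x i : ℝ) * 4 ^ (S i x) * (tail x i) ^ 2 := rfl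

lemma fi_rec_left (x : ℝ) (h0 : 0 ≤ x) (h1 : x < 1/2) (k : ℕ) :
    fi (k+2) x = fi (k+1) (2*x) / 4 := by
  have h2 : tail (2*x) (k+1) = 2 * tail x (k+2) := by
    rw [tail_formula (2*x) (by linarith) k, tail_formula x h0 (k+1),
      show (2:ℝ)^k*(2*x) = 2^(k+1)*x by ring]
    have hp : (0:ℝ) < 2^k := by positivity
    rw [show (2:ℝ)^(k+1) = 2^k*2 by ring]
    field_simp
  rw [fi_eq_S, fi_eq_S, digit_shift, S_shift_left x h0 (by linarith) (k+1), h2]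
  ring

lemma fi_rec_right (x : ℝ) (h0 : 1/2 ≤ x) (h1 : x < 1) (k : ℕ) :
    fi (k+2) x = fi (k+1) (2*x - 1) := by
  have hy0 : (0:ℝ) ≤ 2*x - 1 := by linarith
  have hfl : ⌊(2:ℝ)^k * (2*x-1)⌋ = ⌊(2:ℝ)^(k+1) * x⌋ - 2^k := by
    rw [show (2:ℝ)^k * (2*x-1) = 2^(k+1)*x - ((2^k : ℤ) : ℝ) by push_cast; ring,
      Int.floor_sub_intCast]
  have h2 : tail (2*x-1) (k+1) = 2 * tail x (k+2) := by
    rw [tail_formula (2*x-1) hy0 k, tail_formula x (by linarith) (k+1), hfl]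
    have hp : (0:ℝ) < 2^k := by positivity
    rw [show (2:ℝ)^(k+1) = 2^k*2 by ring]
    push_cast
    field_simp
    ring
  rw [fi_eq_S, fi_eq_S, digit_shift_right x h0, S_shift_right x h0 h1, h2, pow_add]
  ring

lemma S_le (i : ℕ) (x : ℝ) : S i x ≤ i := by
  calc S i x ≤ ∑ _j ∈ Finset.range i, 1 := Finset.sum_le_sum fun j _ => digit_le_one x j
    _ = i := by simp

lemma fi_nonneg (i : ℕ) (x : ℝ) : 0 ≤ fi i x := by
  rw [fi_eq_S]
  have := tail_nonneg x i
  positivity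

lemma fi_le_four (i : ℕ) (x : ℝ) : fi i x ≤ 4 := by
  rw [fi_eq_S]
  have ht0 := tail_nonneg x i
  have ht := tail_le x i
  have hd := digit_cast_le_one x i
  have hd0 := digit_cast_nonneg x i
  have h4 : (4:ℝ)^(S i x) ≤ 4^i := pow_le_pow_right₀ (by norm_num) (S_le i x)
  have hsq : (tail x i)^2 ≤ (2*(1/2)^i)^2 := by
    apply sq_le_sq' <;> nlinarith [pow_nonneg (by norm_num : (0:ℝ) ≤ 1/2) i]
  have hkey : (4:ℝ)^i * (2*(1/2)^i)^2 = 4 := by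
    rw [mul_pow, ← pow_mul, show i*2 = 2*i from mul_comm i 2, pow_mul]
    norm_num
    rw [show (4:ℝ)^i * (4 * (1/4)^i) = 4 * (4 * (1/4))^i by rw [mul_pow]; ring]
    norm_num
  calc (digit x i : ℝ) * 4^(S i x) * (tail x i)^2
      ≤ 1 * 4^i * (2*(1/2)^i)^2 := by
        apply mul_le_mul _ hsq (sq_nonneg _) (by positivity)
        apply mul_le_mul hd h4 (by positivity) (by norm_num)
    _ = 4 := by rw [one_mul, hkey]

lemma fi_one (x : ℝ) (h0 : 0 ≤ x) (h1 : x < 1) :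
    fi 1 x = (digit x 1 : ℝ) * (1 - x)^2 := by
  have hfl : ⌊(2:ℝ)^0 * x⌋ = 0 := by
    rw [pow_zero, one_mul, Int.floor_eq_zero_iff]; exact ⟨h0, h1⟩
  rw [fi_eq_S, show (1:ℕ) = 0 + 1 from rfl, tail_formula x h0 0, hfl]
  rw [S, Finset.sum_range_one, digit_zero_of_lt_one x h0 h1]
  norm_num

lemma fi_zero (x : ℝ) (h0 : 0 ≤ x) (h1 : x < 1) : fi 0 x = 0 := by
  rw [fi_eq_S, digit_zero_of_lt_one x h0 h1]
  norm_num

noncomputable def Zc (x : ℝ) (i : ℕ) : ℕ :=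
  ((Finset.range i).filter (fun j => digit x j = 0)).card

lemma Zc_le (x : ℝ) (i : ℕ) : Zc x i ≤ i :=
  le_trans (Finset.card_filter_le _ _) (by rw [Finset.card_range])

lemma S_le_sub (x : ℝ) (i : ℕ) : S i x ≤ i - Zc x i := by
  rw [S, ← Finset.sum_filter_add_sum_filter_not (Finset.range i) (fun j => digit x j = 0)]
  have h1 : ∑ j ∈ (Finset.range i).filter (fun j => digit x j = 0), digit x j = 0 :=
    Finset.sum_eq_zero fun j hj => (Finset.mem_filter.mp hj).2
  rw [h1, zero_add]
  calc ∑ j ∈ (Finset.range i).filter (fun j => ¬ digit x j = 0), digit x j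
      ≤ ∑ _j ∈ (Finset.range i).filter (fun j => ¬ digit x j = 0), 1 :=
        Finset.sum_le_sum fun j _ => digit_le_one x j
    _ = ((Finset.range i).filter (fun j => ¬ digit x j = 0)).card := by simp
    _ = i - Zc x i := by
        rw [Zc]
        have := Finset.card_filter_add_card_filter_not
          (s := Finset.range i) (p := fun j => digit x j = 0)
        rw [Finset.card_range] at this
        omega

lemma tail_eq_next (x : ℝ) (i : ℕ) (h : digit x i = 1) : tail x i = tail x (i+1) := by
  rw [tail_succ x i, h]
  norm_num

lemma tail_run (x : ℝ) (i m : ℕ) (h : ∀ k, k < m → digit x (i+k) = 1) :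
    tail x i = tail x (i+m) := by
  induction m with
  | zero => rfl
  | succ m ih =>
    rw [ih (fun k hk => h k (by omega)), show i+(m+1) = (i+m)+1 from rfl]
    exact tail_eq_next x (i+m) (h m (by omega))

lemma tail_zero_of_all_one (x : ℝ) (i : ℕ) (h : ∀ k, digit x (i+k) = 1) :
    tail x i = 0 := by
  rw [tail]
  convert tsum_zero with j
  rw [h j]
  norm_num

lemma geom_quarter_sum_le (M : ℕ) : ∑ m ∈ Finset.range M, ((1:ℝ)/4)^m ≤ 4/3 := by
  rw [geom_sum_eq (by norm_num), div_le_iff_of_neg (by norm_num : ((1:ℝ)/4) - 1 < 0)]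
  have : (0:ℝ) ≤ (1/4)^M := by positivity
  nlinarith

noncomputable def gbd : ℕ × ℕ → ℝ := fun p => 4 * (1/4)^p.1 * (1/4)^p.2

lemma gbd_nonneg (p : ℕ × ℕ) : 0 ≤ gbd p := by rw [gbd]; positivity

lemma gbd_finset_sum_le (Q : Finset (ℕ × ℕ)) : ∑ p ∈ Q, gbd p ≤ 64/9 := by
  classical
  set M := max (Q.sup Prod.fst) (Q.sup Prod.snd) + 1 with hM
  have hsub : Q ⊆ Finset.range M ×ˢ Finset.range M := by
    intro p hp
    rw [Finset.mem_product, Finset.mem_range, Finset.mem_range]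
    constructor
    · have := Finset.le_sup (f := Prod.fst) hp; omega
    · have := Finset.le_sup (f := Prod.snd) hp; omega
  calc ∑ p ∈ Q, gbd p ≤ ∑ p ∈ Finset.range M ×ˢ Finset.range M, gbd p :=
        Finset.sum_le_sum_of_subset_of_nonneg hsub (fun p _ _ => gbd_nonneg p)
    _ = 4 * (∑ m ∈ Finset.range M, ((1:ℝ)/4)^m) * (∑ k ∈ Finset.range M, ((1:ℝ)/4)^k) := by
        simp only [gbd]
        rw [Finset.sum_product]
        simp only [← Finset.mul_sum, ← Finset.sum_mul]
    _ ≤ 4 * (4/3) * (4/3) := by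
        have h1 := geom_quarter_sum_le M
        have h2 : (0:ℝ) ≤ ∑ m ∈ Finset.range M, ((1:ℝ)/4)^m :=
          Finset.sum_nonneg fun m _ => by positivity
        nlinarith
    _ ≤ 64/9 := by norm_num

open Classical in
noncomputable def emap (x : ℝ) (i : ℕ) : ℕ × ℕ :=
  if h : ∃ k, digit x (i+k) = 0 then (Zc x i, Nat.find h) else (0, 0)

lemma fi_le_gbd (x : ℝ) (i : ℕ) (hd1 : digit x i = 1) (hex : ∃ k, digit x (i+k) = 0) :
    fi i x ≤ gbd (emap x i) := by
  classical
  set m := Nat.find hex with hm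
  have hemap : emap x i = (Zc x i, m) := by rw [emap]; rw [dif_pos hex]
  have hrun : ∀ k, k < m → digit x (i+k) = 1 := by
    intro k hk
    have h1 := Nat.find_min hex hk
    have h2 := digit_le_one x (i+k)
    omega
  have htail : tail x i = tail x (i+m) := tail_run x i m hrun
  have hle : tail x i ≤ 2 * (1/2)^(i+m) := htail ▸ tail_le x (i+m)
  have ht0 : 0 ≤ tail x i := tail_nonneg x i
  set b := Zc x i with hb
  set a := i - b with ha
  have hab : a + b = i := by
    have := Zc_le x i; omega
  have hS : (4:ℝ)^(S i x) ≤ 4^a := pow_le_pow_right₀ (by norm_num) (S_le_sub x i)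
  have hsq : (tail x i)^2 ≤ (2*(1/2)^(i+m))^2 := by nlinarith
  have key : (4:ℝ)^a * (2*(1/2)^(i+m))^2 = gbd (b, m) := by
    rw [gbd]
    have h1 : ((2:ℝ)*(1/2)^(i+m))^2 = 4 * (1/4)^(i+m) := by
      rw [mul_pow, ← pow_mul, mul_comm (i+m) 2, pow_mul]
      norm_num
    rw [h1, ← hab, pow_add, pow_add]
    have h2 : (4:ℝ)^a * ((1:ℝ)/4)^a = 1 := by
      rw [← mul_pow]; norm_num
    field_simp
    nlinarith [h2]
  calc fi i x = (digit x i : ℝ) * 4^(S i x) * (tail x i)^2 := fi_eq_S i x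
    _ ≤ 1 * 4^a * (2*(1/2)^(i+m))^2 := by
        apply mul_le_mul _ hsq (sq_nonneg _) (by positivity)
        apply mul_le_mul _ hS (by positivity) (by norm_num)
        rw [hd1]; norm_num
    _ = gbd (emap x i) := by rw [one_mul, key, hemap]

lemma emap_inj_aux (x : ℝ) (i i' : ℕ) (hlt : i < i') (hd : digit x i = 1)
    (hex : ∃ k, digit x (i+k) = 0) (hex' : ∃ k, digit x (i'+k) = 0) :
    emap x i ≠ emap x i' := by
  classical
  intro heq
  rw [emap, emap] at heq
  rw [dif_pos hex, dif_pos hex', Prod.mk.injEq] at heq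
  obtain ⟨hZ, hmm⟩ := heq
  set m := Nat.find hex with hm
  set m' := Nat.find hex' with hm'
  -- no zeros in [i, i')
  have hnoz : ∀ j, i ≤ j → j < i' → digit x j ≠ 0 := by
    intro j hij hji' hj0
    have hss : (Finset.range i).filter (fun j => digit x j = 0) ⊂
        (Finset.range i').filter (fun j => digit x j = 0) := by
      refine ⟨Finset.filter_subset_filter _ (by simp [Finset.range_subset]; omega), ?_⟩
      intro hsub
      have hjmem : j ∈ (Finset.range i').filter (fun j => digit x j = 0) := by
        simp [Finset.mem_filter, Finset.mem_range]; exact ⟨by omega, hj0⟩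
      have := hsub hjmem
      simp [Finset.mem_filter, Finset.mem_range] at this
      omega
    have hcard : Zc x i < Zc x i' := by
      unfold Zc
      exact Finset.card_lt_card hss
    omega
  have hzm : digit x (i+m) = 0 := Nat.find_spec hex
  have hzm' : digit x (i'+m') = 0 := Nat.find_spec hex'
  have h1 : i' ≤ i + m := by
    by_contra hc
    exact hnoz (i+m) (by omega) (by omega) hzm
  have h2 : i' + m' ≤ i + m := by
    have : digit x (i' + (i+m-i')) = 0 := by
      rw [show i' + (i+m-i') = i+m by omega]; exact hzm
    have := Nat.find_min' hex' this
    omega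
  have h3 : i + m ≤ i' + m' := by
    have : digit x (i + (i'+m'-i)) = 0 := by
      rw [show i + (i'+m'-i) = i'+m' by omega]; exact hzm'
    have := Nat.find_min' hex this
    omega
  omega

theorem sum_fi_le (x : ℝ) (n : ℕ) : ∑ i ∈ Finset.range n, fi i x ≤ 64/9 := by
  classical
  set T := (Finset.range n).filter
    (fun i => digit x i = 1 ∧ ∃ k, digit x (i+k) = 0) with hT
  have hstep1 : ∑ i ∈ Finset.range n, fi i x = ∑ i ∈ T, fi i x := by
    symm
    apply Finset.sum_subset (Finset.filter_subset _ _)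
    intro i hi hnot
    rw [Finset.mem_filter] at hnot
    push_neg at hnot
    by_cases hd : digit x i = 1
    · have hne := hnot hi hd
      have hall : ∀ k, digit x (i+k) = 1 := by
        intro k
        have h1 := hne k
        have h2 := digit_le_one x (i+k)
        omega
      rw [fi_eq_S, tail_zero_of_all_one x i hall]
      ring
    · have hz : digit x i = 0 := by have := digit_le_one x i; omega
      rw [fi_eq_S, hz]
      norm_num
  have hinj : Set.InjOn (emap x) T := by
    intro i hi i' hi' heq
    rw [hT, Finset.coe_filter] at hi hi'
    simp only [Set.mem_setOf_eq] at hi hi'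
    rcases lt_trichotomy i i' with h | h | h
    · exact absurd heq (emap_inj_aux x i i' h hi.2.1 hi.2.2 hi'.2.2)
    · exact h
    · exact absurd heq.symm (emap_inj_aux x i' i h hi'.2.1 hi'.2.2 hi.2.2)
  calc ∑ i ∈ Finset.range n, fi i x = ∑ i ∈ T, fi i x := hstep1
    _ ≤ ∑ i ∈ T, gbd (emap x i) := by
        apply Finset.sum_le_sum
        intro i hi
        rw [hT, Finset.mem_filter] at hi
        exact fi_le_gbd x i hi.2.1 hi.2.2
    _ = ∑ p ∈ T.image (emap x), gbd p := (Finset.sum_image fun i hi j hj hij =>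
        hinj (Finset.mem_coe.mpr hi) (Finset.mem_coe.mpr hj) hij).symm
    _ ≤ 64/9 := gbd_finset_sum_le _

lemma meas_digit (j : ℕ) : Measurable (fun x : ℝ => (digit x j : ℝ)) := by
  have h : Measurable (fun x : ℝ => ⌊2^j * x⌋) := (measurable_const.mul measurable_id).floor
  exact (measurable_from_top (f := fun n : ℤ => ((n.toNat % 2 : ℕ) : ℝ))).comp h

lemma meas_digit_nat (j : ℕ) : Measurable (fun x : ℝ => digit x j) := by
  have h : Measurable (fun x : ℝ => ⌊2^j * x⌋) := (measurable_const.mul measurable_id).floor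
  exact (measurable_from_top (f := fun n : ℤ => n.toNat % 2)).comp h

lemma meas_pow4S (i : ℕ) : Measurable (fun x : ℝ => (4:ℝ)^(S i x)) := by
  have h : ∀ x : ℝ, (4:ℝ)^(S i x) = ∏ j ∈ Finset.range i, (4:ℝ)^(digit x j) :=
    fun x => (Finset.prod_pow_eq_pow_sum _ _ _).symm
  simp_rw [h]
  apply Finset.measurable_prod
  intro j _
  have hd : Measurable (fun x : ℝ => ⌊2^j * x⌋) := (measurable_const.mul measurable_id).floor
  exact (measurable_from_top (f := fun n : ℤ => (4:ℝ)^((n.toNat % 2 : ℕ)))).comp hd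

noncomputable def Gc (i : ℕ) (x : ℝ) : ℝ :=
  (digit x (i+1) : ℝ) * 4^(S (i+1) x) * ((1 + ⌊2^i*x⌋)/2^i - x)^2

lemma meas_Gc (i : ℕ) : Measurable (Gc i) := by
  apply Measurable.mul
  · exact (meas_digit (i+1)).mul (meas_pow4S (i+1))
  · apply Measurable.pow_const
    apply Measurable.sub _ measurable_id
    apply Measurable.div_const
    exact measurable_const.add
      (Measurable.comp (measurable_from_top (f := fun n : ℤ => (n:ℝ)))
        ((measurable_const.mul measurable_id).floor))

lemma fi_eq_Gc (i : ℕ) (x : ℝ) (hx : 0 ≤ x) : fi (i+1) x = Gc i x := by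
  rw [fi_eq_S, Gc, tail_formula x hx i]

lemma fi_integrableOn (i : ℕ) :
    MeasureTheory.IntegrableOn (fi i) (Set.Ioc (0:ℝ) 1) MeasureTheory.volume := by
  cases i with
  | zero =>
    have hze : (fun _ : ℝ => (0:ℝ)) =ᵐ[MeasureTheory.volume.restrict (Set.Ioc (0:ℝ) 1)] fi 0 := by
      have h1 : ∀ᵐ x : ℝ ∂MeasureTheory.volume.restrict (Set.Ioc (0:ℝ) 1), x ∈ Set.Ioc (0:ℝ) 1 :=
        MeasureTheory.ae_restrict_mem measurableSet_Ioc
      have h2 : ∀ᵐ x : ℝ ∂MeasureTheory.volume.restrict (Set.Ioc (0:ℝ) 1), x ≠ 1 := by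
        refine MeasureTheory.ae_restrict_of_ae ?_
        have : MeasureTheory.volume ({(1:ℝ)} : Set ℝ) = 0 := Real.volume_singleton
        exact (MeasureTheory.measure_eq_zero_iff_ae_notMem.mp this).mono fun x hx => hx
      filter_upwards [h1, h2] with x hx hne
      rw [fi_zero x (le_of_lt hx.1) (lt_of_le_of_ne hx.2 hne)]
    exact (MeasureTheory.integrable_zero _ _ _).congr hze
  | succ i =>
    have hGint : MeasureTheory.IntegrableOn (Gc i) (Set.Ioc (0:ℝ) 1) MeasureTheory.volume := by
      constructor
      · exact (meas_Gc i).aestronglyMeasurable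
      · apply MeasureTheory.HasFiniteIntegral.of_bounded (C := 4)
        have h1 : ∀ᵐ x : ℝ ∂MeasureTheory.volume.restrict (Set.Ioc (0:ℝ) 1), x ∈ Set.Ioc (0:ℝ) 1 :=
          MeasureTheory.ae_restrict_mem measurableSet_Ioc
        filter_upwards [h1] with x hx
        rw [← fi_eq_Gc i x (le_of_lt hx.1), Real.norm_eq_abs,
          abs_of_nonneg (fi_nonneg _ _)]
        exact fi_le_four _ _
    exact hGint.congr_fun (fun x hx => (fi_eq_Gc i x (le_of_lt hx.1)).symm) measurableSet_Ioc

lemma fi_intervalIntegrable (i : ℕ) :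
    IntervalIntegrable (fi i) MeasureTheory.volume 0 1 :=
  (intervalIntegrable_iff_integrableOn_Ioc_of_le (by norm_num)).mpr (fi_integrableOn i)

open intervalIntegral MeasureTheory in
lemma ae_ne (c : ℝ) : ∀ᵐ x : ℝ ∂MeasureTheory.volume, x ≠ c := by
  have : MeasureTheory.volume ({c} : Set ℝ) = 0 := Real.volume_singleton
  exact (MeasureTheory.measure_eq_zero_iff_ae_notMem.mp this).mono fun x hx => hx

lemma integral_fi_rec (k : ℕ) :
    ∫ x in (0:ℝ)..1, fi (k+2) x = 5/8 * ∫ x in (0:ℝ)..1, fi (k+1) x := by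
  have hI := fi_intervalIntegrable (k+2)
  have h1 : IntervalIntegrable (fi (k+2)) MeasureTheory.volume 0 (1/2) :=
    hI.mono_set (by rw [Set.uIcc_of_le (by norm_num), Set.uIcc_of_le (by norm_num)]
                    exact Set.Icc_subset_Icc le_rfl (by norm_num))
  have h2 : IntervalIntegrable (fi (k+2)) MeasureTheory.volume (1/2) 1 :=
    hI.mono_set (by rw [Set.uIcc_of_le (by norm_num), Set.uIcc_of_le (by norm_num)]
                    exact Set.Icc_subset_Icc (by norm_num) le_rfl)
  have hsplit : ∫ x in (0:ℝ)..1, fi (k+2) x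
      = (∫ x in (0:ℝ)..(1/2), fi (k+2) x) + ∫ x in (1/2:ℝ)..1, fi (k+2) x :=
    (intervalIntegral.integral_add_adjacent_intervals h1 h2).symm
  have hleft : ∫ x in (0:ℝ)..(1/2), fi (k+2) x = 1/8 * ∫ x in (0:ℝ)..1, fi (k+1) x := by
    have hcong : ∫ x in (0:ℝ)..(1/2), fi (k+2) x
        = ∫ x in (0:ℝ)..(1/2), fi (k+1) (2*x) / 4 := by
      apply intervalIntegral.integral_congr_ae
      filter_upwards [ae_ne (1/2 : ℝ)] with x hne hmem
      rw [Set.uIoc_of_le (by norm_num : (0:ℝ) ≤ 1/2)] at hmem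
      exact fi_rec_left x (le_of_lt hmem.1) (lt_of_le_of_ne hmem.2 hne) k
    rw [hcong, intervalIntegral.integral_div,
      intervalIntegral.integral_comp_mul_left (fi (k+1)) (by norm_num : (2:ℝ) ≠ 0)]
    norm_num
    ring
  have hright : ∫ x in (1/2:ℝ)..1, fi (k+2) x = 1/2 * ∫ x in (0:ℝ)..1, fi (k+1) x := by
    have hcong : ∫ x in (1/2:ℝ)..1, fi (k+2) x
        = ∫ x in (1/2:ℝ)..1, fi (k+1) (2*x - 1) := by
      apply intervalIntegral.integral_congr_ae
      filter_upwards [ae_ne (1:ℝ)] with x hne hmem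
      rw [Set.uIoc_of_le (by norm_num : (1/2:ℝ) ≤ 1)] at hmem
      exact fi_rec_right x (le_of_lt hmem.1) (lt_of_le_of_ne hmem.2 hne) k
    rw [hcong, intervalIntegral.integral_comp_mul_sub (fi (k+1)) (by norm_num : (2:ℝ) ≠ 0) 1]
    norm_num
  rw [hsplit, hleft, hright]
  ring

lemma integral_fi_zero : ∫ x in (0:ℝ)..1, fi 0 x = 0 := by
  have hcong : ∫ x in (0:ℝ)..1, fi 0 x = ∫ x in (0:ℝ)..1, (0:ℝ) := by
    apply intervalIntegral.integral_congr_ae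
    filter_upwards [ae_ne (1:ℝ)] with x hne hmem
    rw [Set.uIoc_of_le (by norm_num : (0:ℝ) ≤ 1)] at hmem
    exact fi_zero x (le_of_lt hmem.1) (lt_of_le_of_ne hmem.2 hne)
  rw [hcong, intervalIntegral.integral_zero]

lemma integral_fi_one : ∫ x in (0:ℝ)..1, fi 1 x = 1/24 := by
  have hI := fi_intervalIntegrable 1
  have h1 : IntervalIntegrable (fi 1) MeasureTheory.volume 0 (1/2) :=
    hI.mono_set (by rw [Set.uIcc_of_le (by norm_num), Set.uIcc_of_le (by norm_num)]
                    exact Set.Icc_subset_Icc le_rfl (by norm_num))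
  have h2 : IntervalIntegrable (fi 1) MeasureTheory.volume (1/2) 1 :=
    hI.mono_set (by rw [Set.uIcc_of_le (by norm_num), Set.uIcc_of_le (by norm_num)]
                    exact Set.Icc_subset_Icc (by norm_num) le_rfl)
  have hsplit : ∫ x in (0:ℝ)..1, fi 1 x
      = (∫ x in (0:ℝ)..(1/2), fi 1 x) + ∫ x in (1/2:ℝ)..1, fi 1 x :=
    (intervalIntegral.integral_add_adjacent_intervals h1 h2).symm
  have hleft : ∫ x in (0:ℝ)..(1/2), fi 1 x = 0 := by
    have hcong : ∫ x in (0:ℝ)..(1/2), fi 1 x = ∫ x in (0:ℝ)..(1/2), (0:ℝ) := by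
      apply intervalIntegral.integral_congr_ae
      filter_upwards [ae_ne (1/2:ℝ)] with x hne hmem
      rw [Set.uIoc_of_le (by norm_num : (0:ℝ) ≤ 1/2)] at hmem
      have hx1 : x < 1/2 := lt_of_le_of_ne hmem.2 hne
      rw [fi_one x (le_of_lt hmem.1) (by linarith), digit_one_left x (le_of_lt hmem.1) hx1]
      norm_num
    rw [hcong, intervalIntegral.integral_zero]
  have hright : ∫ x in (1/2:ℝ)..1, fi 1 x = 1/24 := by
    have hcong : ∫ x in (1/2:ℝ)..1, fi 1 x = ∫ x in (1/2:ℝ)..1, (1-x)^2 := by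
      apply intervalIntegral.integral_congr_ae
      filter_upwards [ae_ne (1:ℝ)] with x hne hmem
      rw [Set.uIoc_of_le (by norm_num : (1/2:ℝ) ≤ 1)] at hmem
      have hx1 : x < 1 := lt_of_le_of_ne hmem.2 hne
      rw [fi_one x (by linarith [hmem.1]) hx1, digit_one_right x (le_of_lt hmem.1) hx1]
      norm_num
    rw [hcong]
    have hexp : ∀ x : ℝ, (1-x)^2 = 1 - 2*x + x^2 := fun x => by ring
    simp_rw [hexp]
    have hd : ∀ x ∈ Set.uIcc (1/2:ℝ) 1,
        HasDerivAt (fun x : ℝ => x - x^2 + x^3/3) (1 - 2*x + x^2) x := by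
      intro x _
      have h1 : HasDerivAt (fun x : ℝ => x - x^2 + x^3/3)
          (1 - (2*x^1) + (3*x^2)/3) x :=
        ((hasDerivAt_id x).sub (hasDerivAt_pow 2 x)).add ((hasDerivAt_pow 3 x).div_const 3)
      convert h1 using 1
      ring
    rw [intervalIntegral.integral_eq_sub_of_hasDerivAt hd
      ((by fun_prop : Continuous fun x : ℝ => 1 - 2*x + x^2).intervalIntegrable _ _)]
    norm_num
  rw [hsplit, hleft, hright]
  ring

lemma integral_fi_succ (m : ℕ) :
    ∫ x in (0:ℝ)..1, fi (m+1) x = 1/24 * (5/8)^m := by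
  induction m with
  | zero => simpa using integral_fi_one
  | succ m ih =>
    rw [integral_fi_rec m, ih]
    ring

lemma J_summable : Summable (fun i : ℕ => ∫ x in (0:ℝ)..1, fi i x) := by
  rw [← summable_nat_add_iff 1]
  apply Summable.congr ((summable_geometric_of_lt_one (by norm_num) (by norm_num :
    (5:ℝ)/8 < 1)).mul_left (1/24))
  intro m
  exact (integral_fi_succ m).symm

lemma J_tsum : ∑' i : ℕ, ∫ x in (0:ℝ)..1, fi i x = 1/24 * ∑' i : ℕ, ((5:ℝ)/8)^i := by
  rw [Summable.tsum_eq_zero_add J_summable, integral_fi_zero, zero_add]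
  rw [tsum_congr (fun m => integral_fi_succ m), tsum_mul_left]

lemma F_eq_tsum (x : ℝ) : F x = ∑' i : ℕ, fi i x := rfl

lemma integral_F_eq : ∫ x in (0:ℝ)..1, F x = ∑' i : ℕ, ∫ x in (0:ℝ)..1, fi i x := by
  set μ := MeasureTheory.volume.restrict (Set.Ioc (0:ℝ) 1) with hμ
  have hint : ∀ i : ℕ, MeasureTheory.Integrable (fi i) μ := fun i => fi_integrableOn i
  have hnorm : Summable (fun i : ℕ => ∫ a, ‖fi i a‖ ∂μ) := by
    apply Summable.congr (J_summable)
    intro i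
    rw [intervalIntegral.integral_of_le (by norm_num : (0:ℝ) ≤ 1)]
    apply MeasureTheory.integral_congr_ae
    filter_upwards with a
    rw [Real.norm_of_nonneg (fi_nonneg i a)]
  have hHS := MeasureTheory.hasSum_integral_of_summable_integral_norm hint hnorm
  have hFμ : ∫ a, F a ∂μ = ∫ a, (∑' i : ℕ, fi i a) ∂μ := rfl
  rw [intervalIntegral.integral_of_le (by norm_num : (0:ℝ) ≤ 1)]
  have := hHS.tsum_eq
  rw [← hFμ] at this
  rw [← this]
  exact tsum_congr fun i =>
    (intervalIntegral.integral_of_le (by norm_num : (0:ℝ) ≤ 1)).symm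

theorem F_termwise_integration :
    (∀ x ∈ Set.Icc (0 : ℝ) 1, HasSum (fun i : ℕ => fi i x) (F x)) ∧
    (∃ C : ℝ, ∀ x ∈ Set.Icc (0 : ℝ) 1, ∀ n : ℕ, |∑ i ∈ Finset.range n, fi i x| ≤ C) ∧
    (∫ x in (0 : ℝ)..1, F x = ∑' i : ℕ, ∫ x in (0 : ℝ)..1, fi i x) ∧
    (∑' i : ℕ, ∫ x in (0 : ℝ)..1, fi i x = (1 / 24) * ∑' i : ℕ, (5 / 8 : ℝ) ^ i) ∧
    (∫ x in (0 : ℝ)..1, F x = 1 / 9) := by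
  refine ⟨?_, ?_, integral_F_eq, J_tsum, ?_⟩
  · intro x _
    exact (summable_of_sum_range_le (fun n => fi_nonneg n x) (fun n => sum_fi_le x n)).hasSum
  · refine ⟨64/9, fun x _ n => ?_⟩
    rw [abs_of_nonneg (Finset.sum_nonneg fun i _ => fi_nonneg i x)]
    exact sum_fi_le x n
  · rw [integral_F_eq, J_tsum, tsum_geometric_of_lt_one (by norm_num) (by norm_num)]
    norm_num
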